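/- arXiv:2303.07052 — 4 statements merged into one kernel-verified Lean document; each statement's English description precedes it below -/
import Mathlib

section
/- Let α ∈ ℂ with Re(α) > 0, let x : ℕ → ℂ, and let z ∈ ℂ with |z| > 1 be such that Σ_{k=0}^∞ |x(k)|·|z|^{−k} < ∞. Define the fractional sum (Δ^{−α}x)(n) = Σ_{s=0}^n φ_α(n−s)·x(s) for n ∈ ℕ. Then the series Σ_{n=0}^∞ (Δ^{−α}x)(n)·z^{−n} converges absolutely and equals (1−z^{−1})^{−α} · Σ_{k=0}^∞ x(k)·z^{−k}, where (1−z^{−1})^{−α} is the principal complex power. -/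
open Filter Finset Complex Topology

noncomputable def phiC (α : ℂ) (n : ℕ) : ℂ :=
  Complex.Gamma ((n : ℂ) + α) / (Complex.Gamma α * Complex.Gamma ((n : ℂ) + 1))

lemma phiC_zero (α : ℂ) (hα : 0 < α.re) : phiC α 0 = 1 := by
  have hΓ : Complex.Gamma α ≠ 0 := Complex.Gamma_ne_zero_of_re_pos hα
  simp [phiC, Complex.Gamma_one, hΓ]

lemma phiC_ne_zero (α : ℂ) (hα : 0 < α.re) (n : ℕ) : phiC α n ≠ 0 := by
  have h1 : Complex.Gamma ((n : ℂ) + α) ≠ 0 :=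
    Complex.Gamma_ne_zero_of_re_pos (by simp [Complex.add_re]; positivity)
  have h2 : Complex.Gamma α ≠ 0 := Complex.Gamma_ne_zero_of_re_pos hα
  have h3 : Complex.Gamma ((n : ℂ) + 1) ≠ 0 :=
    Complex.Gamma_ne_zero_of_re_pos (by simp [Complex.add_re]; positivity)
  exact div_ne_zero h1 (mul_ne_zero h2 h3)

lemma phiC_rec (α : ℂ) (hα : 0 < α.re) (n : ℕ) :
    ((n : ℂ) + 1) * phiC α (n + 1) = ((n : ℂ) + α) * phiC α n := by
  have hna : ((n : ℂ) + α) ≠ 0 := by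
    intro h
    have := congrArg Complex.re h
    simp [Complex.add_re] at this
    nlinarith [Nat.cast_nonneg (α := ℝ) n]
  have hn1 : ((n : ℂ) + 1) ≠ 0 := by
    intro h
    have := congrArg Complex.re h
    simp [Complex.add_re] at this
    nlinarith [Nat.cast_nonneg (α := ℝ) n]
  have e1 : Complex.Gamma (((n : ℕ) + 1 : ℕ) + α) = ((n : ℂ) + α) * Complex.Gamma ((n : ℂ) + α) := by
    push_cast
    rw [show (n : ℂ) + 1 + α = ((n : ℂ) + α) + 1 by ring, Complex.Gamma_add_one _ hna]
  have e2 : Complex.Gamma (((n : ℕ) + 1 : ℕ) + 1) = ((n : ℂ) + 1) * Complex.Gamma ((n : ℂ) + 1) := by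
    push_cast
    rw [Complex.Gamma_add_one _ hn1]
  have h2 : Complex.Gamma α ≠ 0 := Complex.Gamma_ne_zero_of_re_pos hα
  have h3 : Complex.Gamma ((n : ℂ) + 1) ≠ 0 :=
    Complex.Gamma_ne_zero_of_re_pos (by simp [Complex.add_re]; positivity)
  simp only [phiC, e1, e2]
  field_simp

lemma tendsto_phiC_ratio (α : ℂ) (hα : 0 < α.re) :
    Tendsto (fun n : ℕ => ‖phiC α (n + 1)‖ / ‖phiC α n‖) atTop (𝓝 1) := by
  have key : ∀ n : ℕ, ‖phiC α (n + 1)‖ / ‖phiC α n‖ = ‖((n : ℂ) + α) / ((n : ℂ) + 1)‖ := by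
    intro n
    have hn1 : ((n : ℂ) + 1) ≠ 0 := by
      exact Nat.cast_add_one_ne_zero n
    have hrec := phiC_rec α hα n
    have : phiC α (n + 1) = ((n : ℂ) + α) / ((n : ℂ) + 1) * phiC α n := by
      field_simp
      linear_combination hrec
    rw [this, norm_mul, mul_div_assoc,
      div_self (norm_ne_zero_iff.mpr (phiC_ne_zero α hα n)), mul_one]
  have h2 : Tendsto (fun n : ℕ => ((n : ℂ) + α) / ((n : ℂ) + 1)) atTop (𝓝 1) := by
    have he : ∀ n : ℕ, ((n : ℂ) + α) / ((n : ℂ) + 1) = 1 + (α - 1) / ((n : ℂ) + 1) := by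
      intro n
      have hn1 : ((n : ℂ) + 1) ≠ 0 := by
        exact Nat.cast_add_one_ne_zero n
      field_simp
      ring
    simp_rw [he]
    have h0 : Tendsto (fun n : ℕ => (α - 1) / ((n : ℂ) + 1)) atTop (𝓝 0) := by
      rw [tendsto_zero_iff_norm_tendsto_zero]
      have : ∀ n : ℕ, ‖(α - 1) / ((n : ℂ) + 1)‖ = ‖α - 1‖ * (1 / ((n : ℝ) + 1)) := by
        intro n
        rw [norm_div]
        have : ‖(n : ℂ) + 1‖ = (n : ℝ) + 1 := by
          rw [show ((n : ℂ) + 1) = ((n + 1 : ℕ) : ℂ) by push_cast; ring,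
            Complex.norm_natCast]
          push_cast; ring
        rw [this]; ring
      simp_rw [this]
      simpa using tendsto_one_div_add_atTop_nhds_zero_nat.const_mul ‖α - 1‖
    simpa using tendsto_const_nhds.add h0
  simp_rw [key]
  simpa using (h2.norm)

lemma summable_norm_phiC_mul (α : ℂ) (hα : 0 < α.re) {r : ℝ} (hr0 : 0 < r) (hr : r < 1) :
    Summable (fun n : ℕ => ‖phiC α n‖ * r ^ n) := by
  apply summable_of_ratio_test_tendsto_lt_one hr
  · filter_upwards with n
    exact mul_ne_zero (norm_ne_zero_iff.mpr (phiC_ne_zero α hα n)) (pow_ne_zero n hr0.ne')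
  · have key : ∀ n : ℕ, ‖‖phiC α (n + 1)‖ * r ^ (n + 1)‖ / ‖‖phiC α n‖ * r ^ n‖
        = (‖phiC α (n + 1)‖ / ‖phiC α n‖) * r := by
      intro n
      have h1 : (0:ℝ) < ‖phiC α n‖ := norm_pos_iff.mpr (phiC_ne_zero α hα n)
      have h2 : (0:ℝ) ≤ ‖phiC α (n+1)‖ := norm_nonneg _
      have h3 : (0:ℝ) < r ^ n := pow_pos hr0 n
      rw [Real.norm_of_nonneg (by positivity), Real.norm_of_nonneg (by positivity), pow_succ',
        mul_div_mul_comm, mul_div_cancel_right₀ _ h3.ne']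
    simp_rw [key]
    have := (tendsto_phiC_ratio α hα).mul_const r
    simpa using this

lemma summable_norm_phiC_deriv (α : ℂ) (hα : 0 < α.re) {r : ℝ} (hr0 : 0 < r) (hr : r < 1) :
    Summable (fun n : ℕ => (n : ℝ) * ‖phiC α n‖ * r ^ (n - 1)) := by
  apply summable_of_ratio_test_tendsto_lt_one hr
  · filter_upwards [eventually_ge_atTop 1] with n hn
    have h1 : (0:ℝ) < ‖phiC α n‖ := norm_pos_iff.mpr (phiC_ne_zero α hα n)
    have hnn : (0:ℝ) < n := by exact_mod_cast hn
    positivity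
  · have hlim : Tendsto (fun n : ℕ => (((n:ℝ) + 1) / n) * ((‖phiC α (n + 1)‖ / ‖phiC α n‖) * r))
        atTop (𝓝 r) := by
      have t1 : Tendsto (fun n : ℕ => ((n:ℝ) + 1) / n) atTop (𝓝 1) := by
        have he : (fun n : ℕ => ((n:ℝ) + 1) / n) =ᶠ[atTop] fun n : ℕ => 1 + 1 / n := by
          filter_upwards [eventually_ge_atTop 1] with n hn
          have : (0:ℝ) < n := by exact_mod_cast hn
          field_simp
        rw [tendsto_congr' he]
        simpa using tendsto_const_nhds.add (tendsto_one_div_atTop_nhds_zero_nat : Tendsto (fun n : ℕ => 1 / (n : ℝ)) atTop (𝓝 0))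
      have t2 := (tendsto_phiC_ratio α hα).mul_const r
      simpa using t1.mul t2
    refine Tendsto.congr' ?_ hlim
    filter_upwards [eventually_ge_atTop 1] with n hn
    have h1 : (0:ℝ) < ‖phiC α n‖ := norm_pos_iff.mpr (phiC_ne_zero α hα n)
    have hnn : (0:ℝ) < n := by exact_mod_cast hn
    have hc : r ^ n = r ^ (n - 1) * r := by
      conv_lhs => rw [← Nat.sub_add_cancel hn]
      rw [pow_succ]
    rw [Real.norm_of_nonneg (by positivity), Real.norm_of_nonneg (by positivity)]
    simp only [Nat.add_sub_cancel]
    push_cast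
    rw [hc, mul_div_mul_comm, mul_div_mul_comm,
      mul_div_cancel_left₀ _ (pow_pos hr0 (n-1)).ne']
    ring

lemma summable_norm_phiC_mul' (α : ℂ) (hα : 0 < α.re) {r : ℝ} (hr0 : 0 ≤ r) (hr : r < 1) :
    Summable (fun n : ℕ => ‖phiC α n‖ * r ^ n) := by
  have h2 : r < (r + 1) / 2 := by linarith
  have h1 : (0:ℝ) < (r + 1) / 2 := by linarith
  refine Summable.of_nonneg_of_le (fun n => by positivity) (fun n => ?_)
    (summable_norm_phiC_mul α hα h1 (by linarith))
  gcongr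


lemma summable_phiC_deriv_term (α : ℂ) (hα : 0 < α.re) {w : ℂ} (hw : ‖w‖ < 1) :
    Summable (fun n : ℕ => phiC α n * ((n : ℂ) * w ^ (n - 1))) := by
  rcases eq_or_ne w 0 with rfl | hw0
  · apply summable_of_ne_finset_zero (s := {0, 1})
    intro n hn
    simp only [Finset.mem_insert, Finset.mem_singleton] at hn
    push_neg at hn
    have h1 : 2 ≤ n := by omega
    have : n - 1 ≠ 0 := by omega
    simp [zero_pow this]
  · have hw0' : 0 < ‖w‖ := norm_pos_iff.mpr hw0
    apply Summable.of_norm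
    have hb : ∀ n : ℕ, ‖phiC α n * ((n : ℂ) * w ^ (n - 1))‖
        = (n : ℝ) * ‖phiC α n‖ * ‖w‖ ^ (n - 1) := by
      intro n
      simp [norm_mul, norm_pow, Complex.norm_natCast]
      ring
    simp_rw [hb]
    exact summable_norm_phiC_deriv α hα hw0' hw

lemma hasDerivAt_phiC_sum (α : ℂ) (hα : 0 < α.re) {w : ℂ} (hw : ‖w‖ < 1) :
    HasDerivAt (fun u : ℂ => ∑' n : ℕ, phiC α n * u ^ n)
      (∑' n : ℕ, phiC α n * ((n : ℂ) * w ^ (n - 1))) w := by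
  set r : ℝ := (‖w‖ + 1) / 2 with hrdef
  have hwr : ‖w‖ < r := by rw [hrdef]; linarith
  have hr0 : 0 < r := lt_of_le_of_lt (norm_nonneg w) hwr
  have hr1 : r < 1 := by rw [hrdef]; linarith
  apply hasDerivAt_tsum_of_isPreconnected
    (g := fun (n : ℕ) (u : ℂ) => phiC α n * u ^ n)
    (g' := fun (n : ℕ) (y : ℂ) => phiC α n * ((n : ℂ) * y ^ (n - 1)))
    (u := fun n : ℕ => (n : ℝ) * ‖phiC α n‖ * r ^ (n - 1))
    (summable_norm_phiC_deriv α hα hr0 hr1) Metric.isOpen_ball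
    ((convex_ball (0:ℂ) r).isPreconnected)
    (y₀ := 0)
  · intro n y _
    exact (hasDerivAt_pow n y).const_mul (phiC α n)
  · intro n y hy
    rw [Metric.mem_ball, dist_zero_right] at hy
    have : ‖phiC α n * ((n : ℂ) * y ^ (n - 1))‖
        = (n : ℝ) * ‖phiC α n‖ * ‖y‖ ^ (n - 1) := by
      simp [norm_mul, norm_pow, Complex.norm_natCast]; ring
    rw [this]
    gcongr
  · rw [Metric.mem_ball, dist_zero_right]; simpa using hr0
  · apply summable_of_ne_finset_zero (s := {0})
    intro n hn
    simp only [Finset.mem_singleton] at hn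
    simp [zero_pow hn]
  · rw [Metric.mem_ball, dist_zero_right]; exact hwr

lemma summable_phiC_term (α : ℂ) (hα : 0 < α.re) {w : ℂ} (hw : ‖w‖ < 1) :
    Summable (fun n : ℕ => phiC α n * w ^ n) := by
  apply Summable.of_norm
  have h : ∀ n : ℕ, ‖phiC α n * w ^ n‖ = ‖phiC α n‖ * ‖w‖ ^ n := by
    intro n; rw [norm_mul, norm_pow]
  simp_rw [h]
  exact summable_norm_phiC_mul' α hα (norm_nonneg w) hw

lemma phiC_deriv_identity (α : ℂ) (hα : 0 < α.re) {w : ℂ} (hw : ‖w‖ < 1) :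
    (1 - w) * (∑' n : ℕ, phiC α n * ((n : ℂ) * w ^ (n - 1)))
      = α * ∑' n : ℕ, phiC α n * w ^ n := by
  set a : ℕ → ℂ := fun n => phiC α n * ((n : ℂ) * w ^ (n - 1)) with ha
  have hsa : Summable a := summable_phiC_deriv_term α hα hw
  have hsf : Summable (fun n : ℕ => phiC α n * w ^ n) := summable_phiC_term α hα hw
  have hwa : ∀ n : ℕ, w * a n = (n : ℂ) * (phiC α n * w ^ n) := by
    intro n
    cases n with
    | zero => simp [ha]
    | succ m =>
      show w * (phiC α (m + 1) * (((m + 1 : ℕ) : ℂ) * w ^ (m + 1 - 1)))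
        = ((m + 1 : ℕ) : ℂ) * (phiC α (m + 1) * w ^ (m + 1))
      rw [Nat.add_sub_cancel, pow_succ]
      ring
  have hswa : Summable (fun n : ℕ => (n : ℂ) * (phiC α n * w ^ n)) :=
    (hsa.mul_left w).congr hwa
  have hsucc : ∀ n : ℕ, a (n + 1)
      = (n : ℂ) * (phiC α n * w ^ n) + α * (phiC α n * w ^ n) := by
    intro n
    have hrec := phiC_rec α hα n
    show phiC α (n + 1) * (((n + 1 : ℕ) : ℂ) * w ^ (n + 1 - 1)) = _
    rw [Nat.add_sub_cancel]
    push_cast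
    linear_combination w ^ n * hrec
  have e1 : ∑' n, a n = ∑' n, a (n + 1) := by
    rw [Summable.tsum_eq_zero_add hsa]
    simp [ha]
  have e2 : ∑' n, a (n + 1)
      = w * (∑' n, a n) + α * ∑' n : ℕ, phiC α n * w ^ n := by
    calc ∑' n, a (n + 1)
        = ∑' n : ℕ, ((n : ℂ) * (phiC α n * w ^ n) + α * (phiC α n * w ^ n)) :=
          tsum_congr hsucc
      _ = (∑' n : ℕ, (n : ℂ) * (phiC α n * w ^ n))
            + ∑' n : ℕ, α * (phiC α n * w ^ n) :=
          Summable.tsum_add hswa (hsf.mul_left α)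
      _ = w * (∑' n, a n) + α * ∑' n : ℕ, phiC α n * w ^ n := by
          rw [← tsum_mul_left, ← tsum_mul_left]
          congr 1
          exact tsum_congr fun n => (hwa n).symm
  have e3 : ∑' n, a n = w * (∑' n, a n) + α * ∑' n : ℕ, phiC α n * w ^ n :=
    e1.trans e2
  linear_combination e3

lemma cpow_mul_tsum_phiC (α : ℂ) (hα : 0 < α.re) {w : ℂ} (hw : ‖w‖ < 1) :
    (1 - w) ^ α * ∑' n : ℕ, phiC α n * w ^ n = 1 := by
  set F : ℂ → ℂ := fun u => (1 - u) ^ α * ∑' n : ℕ, phiC α n * u ^ n with hF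
  have hderiv : ∀ u ∈ Metric.ball (0:ℂ) 1, HasDerivAt F 0 u := by
    intro u hu
    rw [Metric.mem_ball, dist_zero_right] at hu
    have hre : |u.re| ≤ ‖u‖ := by
      exact Complex.abs_re_le_norm u
    have hre1 : u.re < 1 := lt_of_le_of_lt ((le_abs_self u.re).trans hre) hu
    have h1u : (1 : ℂ) - u ≠ 0 := by
      intro h
      rw [sub_eq_zero] at h
      rw [← h] at hu
      simp at hu
    have hslit : (1 - u) ∈ Complex.slitPlane := by
      left
      simp only [Complex.sub_re, Complex.one_re]
      linarith
    have hd1 : HasDerivAt (fun v : ℂ => (1 - v) ^ α) (α * (1 - u) ^ (α - 1) * (-1)) u := by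
      have hbase : HasDerivAt (fun v : ℂ => 1 - v) (-1) u := by
        simpa using (hasDerivAt_id u).const_sub (1 : ℂ)
      exact hbase.cpow_const hslit
    have hd2 := hasDerivAt_phiC_sum α hα hu
    have hd : HasDerivAt F _ u := hd1.mul hd2
    convert hd using 1
    have hpow : (1 - u) ^ α = (1 - u) ^ (α - 1) * (1 - u) := by
      conv_lhs => rw [show α = (α - 1) + 1 by ring]
      rw [Complex.cpow_add _ _ h1u, Complex.cpow_one]
    have hid := phiC_deriv_identity α hα hu
    linear_combination (-(∑' n : ℕ, phiC α n * ((n : ℂ) * u ^ (n - 1))) : ℂ) * hpow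
      - ((1 - u) ^ (α - 1) : ℂ) * hid
  have hdiff : DifferentiableOn ℂ F (Metric.ball 0 1) := fun u hu =>
    ((hderiv u hu).differentiableAt).differentiableWithinAt
  have hzero : ∀ u ∈ Metric.ball (0:ℂ) 1, fderivWithin ℂ F (Metric.ball 0 1) u = 0 := by
    intro u hu
    rw [fderivWithin_of_mem_nhds (Metric.isOpen_ball.mem_nhds hu)]
    have h2 : fderiv ℂ F u = ContinuousLinearMap.smulRight (1 : ℂ →L[ℂ] ℂ) 0 :=
      (hasDerivAt_iff_hasFDerivAt.mp (hderiv u hu)).fderiv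
    rw [h2]
    ext
    simp
  have hwball : w ∈ Metric.ball (0:ℂ) 1 := by
    rw [Metric.mem_ball, dist_zero_right]; exact hw
  have h0ball : (0:ℂ) ∈ Metric.ball (0:ℂ) 1 := Metric.mem_ball_self one_pos
  have hconst : F w = F 0 :=
    (convex_ball (0:ℂ) 1).is_const_of_fderivWithin_eq_zero hdiff hzero hwball h0ball
  have hF0 : F 0 = 1 := by
    have ht : (∑' n : ℕ, phiC α n * (0:ℂ) ^ n) = phiC α 0 := by
      rw [tsum_eq_single 0]
      · simp
      · intro n hn; simp [zero_pow hn]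
    simp only [hF]
    rw [ht, phiC_zero α hα, sub_zero, Complex.one_cpow, mul_one]
  exact hconst.trans hF0

lemma hasSum_phiC (α : ℂ) (hα : 0 < α.re) {w : ℂ} (hw : ‖w‖ < 1) :
    HasSum (fun n : ℕ => phiC α n * w ^ n) ((1 - w) ^ (-α)) := by
  have hsum := summable_phiC_term α hα hw
  have h1 := cpow_mul_tsum_phiC α hα hw
  have heq : ∑' n : ℕ, phiC α n * w ^ n = (1 - w) ^ (-α) := by
    rw [Complex.cpow_neg]
    exact eq_inv_of_mul_eq_one_right h1
  exact heq ▸ hsum.hasSum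


/-- Convolution property of the Z-transform for the fractional sum: for `Re α > 0`,
`|z| > 1` and `∑ |x(k)| |z|^{-k} < ∞`, the Z-transform of
`(Δ^{-α}x)(n) = ∑_{s=0}^n φ_α(n-s) x(s)` converges absolutely and equals
`(1-z⁻¹)^{-α} ∑ x(k) z^{-k}`. -/
theorem z_transform_fractional_sum (α : ℂ) (hα : 0 < α.re) (x : ℕ → ℂ)
    (z : ℂ) (hz : 1 < ‖z‖)
    (hx : Summable (fun k : ℕ => ‖x k‖ * ‖z‖ ^ (-(k : ℤ))))
    (φ : ℕ → ℂ)
    (hφ : ∀ n : ℕ, φ n = Complex.Gamma ((n : ℂ) + α) /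
      (Complex.Gamma α * Complex.Gamma ((n : ℂ) + 1)))
    (Δ : ℕ → ℂ)
    (hΔ : ∀ n : ℕ, Δ n = ∑ s ∈ Finset.range (n + 1), φ (n - s) * x s) :
    Summable (fun n : ℕ => ‖Δ n * z ^ (-(n : ℤ))‖) ∧
      ∑' n : ℕ, Δ n * z ^ (-(n : ℤ))
        = (1 - z⁻¹) ^ (-α) * ∑' k : ℕ, x k * z ^ (-(k : ℤ)) := by
  have hphi : ∀ n : ℕ, φ n = phiC α n := hφ
  set w : ℂ := z⁻¹ with hwdef
  have hw : ‖w‖ < 1 := by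
    rw [hwdef, norm_inv]
    exact inv_lt_one_of_one_lt₀ hz
  have hzpow : ∀ n : ℕ, z ^ (-(n : ℤ)) = w ^ n := by
    intro n; rw [zpow_neg, zpow_natCast, hwdef, inv_pow]
  have hwnorm : ∀ n : ℕ, ‖z‖ ^ (-(n : ℤ)) = ‖w‖ ^ n := by
    intro n; rw [zpow_neg, zpow_natCast, hwdef, norm_inv, inv_pow]
  have hf : Summable (fun n : ℕ => ‖phiC α n * w ^ n‖) := by
    have h : ∀ n : ℕ, ‖phiC α n * w ^ n‖ = ‖phiC α n‖ * ‖w‖ ^ n := fun n => by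
      rw [norm_mul, norm_pow]
    simp_rw [h]
    exact summable_norm_phiC_mul' α hα (norm_nonneg w) hw
  have hg : Summable (fun n : ℕ => ‖x n * w ^ n‖) := by
    apply hx.congr
    intro n
    rw [hwnorm n, ← norm_pow, ← norm_mul]
  have hDelta : ∀ n : ℕ, ∑ k ∈ Finset.range (n + 1),
      (phiC α k * w ^ k) * (x (n - k) * w ^ (n - k)) = Δ n * w ^ n := by
    intro n
    have step1 : ∀ k ∈ Finset.range (n + 1),
        (phiC α k * w ^ k) * (x (n - k) * w ^ (n - k)) = phiC α k * x (n - k) * w ^ n := by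
      intro k hk
      rw [Finset.mem_range] at hk
      have hk' : k ≤ n := Nat.lt_succ_iff.mp hk
      rw [show (phiC α k * w ^ k) * (x (n - k) * w ^ (n - k))
        = phiC α k * x (n - k) * (w ^ k * w ^ (n - k)) by ring, ← pow_add,
        Nat.add_sub_cancel' hk']
    rw [Finset.sum_congr rfl step1,
      ← Finset.sum_range_reflect (fun k => phiC α k * x (n - k) * w ^ n) (n + 1),
      hΔ n, Finset.sum_mul]
    apply Finset.sum_congr rfl
    intro s hs
    rw [Finset.mem_range] at hs
    have hs' : s ≤ n := Nat.lt_succ_iff.mp hs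
    have e : n + 1 - 1 - s = n - s := by omega
    rw [e, Nat.sub_sub_self hs', hphi (n - s)]
  constructor
  · apply (summable_norm_sum_mul_range_of_summable_norm hf hg).congr
    intro n
    rw [hDelta n, hzpow n]
  · calc ∑' n : ℕ, Δ n * z ^ (-(n : ℤ))
        = ∑' n : ℕ, ∑ k ∈ Finset.range (n + 1),
            (phiC α k * w ^ k) * (x (n - k) * w ^ (n - k)) := by
          apply tsum_congr; intro n; rw [hzpow n, ← hDelta n]
      _ = (∑' n : ℕ, phiC α n * w ^ n) * (∑' n : ℕ, x n * w ^ n) :=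
          (tsum_mul_tsum_eq_tsum_sum_range_of_summable_norm hf hg).symm
      _ = (1 - w) ^ (-α) * ∑' k : ℕ, x k * z ^ (-(k : ℤ)) := by
          rw [(hasSum_phiC α hα hw).tsum_eq]
          congr 1
          apply tsum_congr; intro k; rw [hzpow k]
end

section
/- Let α ∈ ℂ with Re(α) > 0, a ∈ ℂ, b ∈ ℝ, τ ∈ ℕ with τ ≥ 1, and x₀ ∈ ℂ. Let x : ℕ → ℂ satisfy x(0) = x₀ and, for every t ≥ 1, x(t) = b·x̄(t−τ) + x₀ + Σ_{j=0}^{t−1} (Γ(t−j+α−1)/(Γ(α)·Γ(t−j)))·(a−1)·x(j), where x̄(s) = x(s) for s ≥ 0 and x̄(s) = 0 for s < 0. Let z ∈ ℂ with |z| > 1 be such that Σ_{k=0}^∞ |x(k)|·|z|^{−k} < ∞, and set X(z) = Σ_{k=0}^∞ x(k)·z^{−k}. Then X(z)·( z − b·z^{1−τ} − (a−1)·(1−z^{−1})^{−α} ) = z·x₀ + x₀/(1−z^{−1}), where (1−z^{−1})^{−α} is the principal complex power. -/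
open Finset Filter Nat

lemma hasDerivAt_one_sub_cpow (β : ℂ) {w : ℂ} (hw : ‖w‖ < 1) :
    HasDerivAt (fun v : ℂ => (1 - v) ^ β) (-β * (1 - w) ^ (β - 1)) w := by
  have hre : |w.re| ≤ ‖w‖ := Complex.abs_re_le_norm w
  have hslit : (1 - w) ∈ Complex.slitPlane := by
    refine Complex.mem_slitPlane_iff.2 (Or.inl ?_)
    simp only [Complex.sub_re, Complex.one_re]
    have := (abs_le.1 hre).2
    linarith
  have h1 : HasDerivAt (fun v : ℂ => 1 - v) (-1) w := (hasDerivAt_id w).const_sub 1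
  have h2 := h1.cpow_const (c := β) hslit
  convert h2 using 1
  ring

lemma iteratedDeriv_one_sub_cpow (α : ℂ) (n : ℕ) :
    Set.EqOn (iteratedDeriv n (fun v : ℂ => (1 - v) ^ (-α)))
      (fun v => (∏ i ∈ range n, (α + i)) * (1 - v) ^ (-α - n)) (Metric.ball 0 1) := by
  induction n with
  | zero =>
    intro w hw
    simp [iteratedDeriv_zero]
  | succ n ih =>
    intro w hw
    have hw' : ‖w‖ < 1 := by simpa [Metric.mem_ball] using hw
    have heq : iteratedDeriv n (fun v : ℂ => (1 - v) ^ (-α))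
        =ᶠ[nhds w] fun v => (∏ i ∈ range n, (α + i)) * (1 - v) ^ (-α - n) :=
      Filter.eventuallyEq_of_mem (Metric.isOpen_ball.mem_nhds hw) ih
    rw [iteratedDeriv_succ, heq.deriv_eq]
    have hd : HasDerivAt (fun v : ℂ => (∏ i ∈ range n, (α + i)) * (1 - v) ^ (-α - n))
        ((∏ i ∈ range n, (α + i)) * (-(-α - n) * (1 - w) ^ (-α - n - 1))) w :=
      (hasDerivAt_one_sub_cpow (-α - n) hw').const_mul _
    rw [hd.deriv]
    rw [prod_range_succ]
    push_cast
    have hexp : -α - (n:ℂ) - 1 = -α - ((n:ℂ) + 1) := by ring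
    rw [hexp]
    ring

lemma hasSum_one_sub_cpow (α : ℂ) {w : ℂ} (hw : ‖w‖ < 1) :
    HasSum (fun n : ℕ => (∏ i ∈ range n, (α + i)) / (n ! : ℂ) * w ^ n) ((1 - w) ^ (-α)) := by
  set F : ℂ → ℂ := fun v => (1 - v) ^ (-α) with hF
  set R : NNReal := ⟨(1 + ‖w‖) / 2, by positivity⟩ with hRdef
  have hRc : (R : ℝ) = (1 + ‖w‖) / 2 := rfl
  have hR1 : (R : ℝ) < 1 := by rw [hRc]; linarith
  have hwR : ‖w‖ < (R : ℝ) := by rw [hRc]; linarith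
  have hR0 : 0 < R := by
    rw [← NNReal.coe_lt_coe, hRc]
    positivity
  have hdiff : DifferentiableOn ℂ F (Metric.closedBall 0 (R : ℝ)) := by
    intro v hv
    have hv1 : ‖v‖ < 1 := by
      have : ‖v‖ ≤ (R : ℝ) := by simpa using hv
      linarith
    exact (hasDerivAt_one_sub_cpow (-α) hv1).differentiableAt.differentiableWithinAt
  have hps := hdiff.hasFPowerSeriesOnBall hR0
  have hmem : w ∈ EMetric.ball (0 : ℂ) (R : ENNReal) := by
    show edist w (0 : ℂ) < (R : ENNReal)
    rw [edist_zero_right]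
    exact_mod_cast hwR
  have hsum := hps.hasSum_iteratedFDeriv hmem
  rw [zero_add] at hsum
  have hterm : ∀ n : ℕ, ((n ! : ℂ))⁻¹ • iteratedFDeriv ℂ n F 0 (fun _ => w)
      = (∏ i ∈ range n, (α + i)) / (n ! : ℂ) * w ^ n := by
    intro n
    have h1 : (fun _ : Fin n => w) = fun i : Fin n => w • ((fun _ : Fin n => (1 : ℂ)) i) := by
      funext i; simp
    rw [h1, ContinuousMultilinearMap.map_smul_univ, ← iteratedDeriv_eq_iteratedFDeriv]
    have h0 : (0 : ℂ) ∈ Metric.ball (0 : ℂ) 1 := by simp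
    rw [iteratedDeriv_one_sub_cpow α n h0]
    simp only [sub_zero, Complex.one_cpow, mul_one, Finset.prod_const, Finset.card_univ,
      Fintype.card_fin, smul_eq_mul]
    ring
  exact HasSum.congr_fun hsum fun n => (hterm n).symm

lemma summable_norm_one_sub_cpow (α : ℂ) {w : ℂ} (hw : ‖w‖ < 1) :
    Summable (fun n : ℕ => ‖(∏ i ∈ range n, (α + i)) / (n ! : ℂ) * w ^ n‖) := by
  set f : ℕ → ℂ := fun n => (∏ i ∈ range n, (α + i)) / (n ! : ℂ) * w ^ n with hf
  set r : ℝ := (1 + ‖w‖) / 2 with hr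
  have hr1 : r < 1 := by rw [hr]; linarith
  have hwr : ‖w‖ < r := by rw [hr]; linarith
  have hrpos : 0 < r := by positivity
  refine summable_of_ratio_norm_eventually_le hr1 ?_
  obtain ⟨N, hN⟩ := exists_nat_ge (‖α‖ / (r - ‖w‖))
  filter_upwards [Filter.eventually_ge_atTop N] with n hn
  have hstep : f (n + 1) = f n * ((α + n) * w / ((n : ℂ) + 1)) := by
    rw [hf]
    simp only
    rw [prod_range_succ, factorial_succ, pow_succ]
    push_cast
    have h1 : ((n ! : ℂ)) ≠ 0 := by exact_mod_cast Nat.factorial_ne_zero n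
    have h2 : ((n : ℂ) + 1) ≠ 0 := Nat.cast_add_one_ne_zero n
    field_simp
  have hratio : ‖(α + n) * w / ((n : ℂ) + 1)‖ ≤ r := by
    rw [norm_div, norm_mul]
    have hden : ‖((n : ℂ) + 1)‖ = (n : ℝ) + 1 := by
      rw [show ((n : ℂ) + 1) = ((n + 1 : ℕ) : ℂ) by push_cast; ring]
      rw [Complex.norm_natCast]
      push_cast; ring
    rw [hden, div_le_iff₀ (by positivity)]
    have hna : ‖α + (n : ℂ)‖ ≤ ‖α‖ + n := by
      calc ‖α + (n : ℂ)‖ ≤ ‖α‖ + ‖(n : ℂ)‖ := norm_add_le _ _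
      _ = ‖α‖ + n := by rw [Complex.norm_natCast]
    have hNn : ‖α‖ ≤ n * (r - ‖w‖) := by
      have h1 : ‖α‖ / (r - ‖w‖) ≤ (n : ℝ) := le_trans hN (by exact_mod_cast hn)
      rw [div_le_iff₀ (by linarith)] at h1
      linarith [h1]
    have hw0 : 0 ≤ ‖w‖ := norm_nonneg w
    linarith [mul_le_mul_of_nonneg_right hna hw0,
      mul_le_mul_of_nonneg_left hw.le (norm_nonneg α), hNn, hrpos]
  calc ‖‖f (n + 1)‖‖ = ‖f n‖ * ‖(α + n) * w / ((n : ℂ) + 1)‖ := by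
        rw [norm_norm, hstep, norm_mul]
  _ ≤ ‖f n‖ * r := mul_le_mul_of_nonneg_left hratio (norm_nonneg _)
  _ = r * ‖‖f n‖‖ := by rw [norm_norm]; ring

lemma gamma_add_nat_eq (α : ℂ) (hα : 0 < α.re) (k : ℕ) :
    Complex.Gamma (α + k) = Complex.Gamma α * ∏ i ∈ range k, (α + i) := by
  induction k with
  | zero => simp
  | succ k ih =>
    have hne : α + (k : ℂ) ≠ 0 := by
      intro h
      have : (α + (k : ℂ)).re = 0 := by rw [h]; simp
      simp only [Complex.add_re, Complex.natCast_re] at this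
      have : (0:ℝ) ≤ (k:ℝ) := Nat.cast_nonneg k
      linarith
    have harg : α + ((k + 1 : ℕ) : ℂ) = (α + k) + 1 := by push_cast; ring
    rw [harg, Complex.Gamma_add_one _ hne, ih, prod_range_succ]
    ring

lemma gamma_coef_eq (α : ℂ) (hα : 0 < α.re) (k : ℕ) :
    Complex.Gamma (((k + 1 : ℕ) : ℂ) + α - 1) /
      (Complex.Gamma α * Complex.Gamma ((k + 1 : ℕ) : ℂ))
      = (∏ i ∈ range k, (α + i)) / (k ! : ℂ) := by
  have h1 : ((k + 1 : ℕ) : ℂ) + α - 1 = α + k := by push_cast; ring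
  have h2 : ((k + 1 : ℕ) : ℂ) = (k : ℂ) + 1 := by push_cast; ring
  rw [h1, h2, Complex.Gamma_nat_eq_factorial, gamma_add_nat_eq α hα k]
  have hΓ : Complex.Gamma α ≠ 0 := Complex.Gamma_ne_zero_of_re_pos hα
  have hk : (k ! : ℂ) ≠ 0 := by exact_mod_cast Nat.factorial_ne_zero k
  field_simp

/-- Equation (3) of the paper: the Z-transform of a solution of the delayed
fractional-order linear difference equation (2) satisfies
`X(z)(z - b z^{1-τ} - (a-1)(1-z⁻¹)^{-α}) = z x₀ + x₀/(1-z⁻¹)`. -/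
theorem z_transform_delayed_fractional_eq (α a : ℂ) (hα : 0 < α.re) (b : ℝ)
    (τ : ℕ) (hτ : 1 ≤ τ) (x₀ : ℂ)
    (x : ℕ → ℂ) (xb : ℤ → ℂ)
    (hxb : ∀ s : ℤ, xb s = if s < 0 then 0 else x s.toNat)
    (hx0 : x 0 = x₀)
    (hrec : ∀ t : ℕ, 1 ≤ t → x t = (b : ℂ) * xb ((t : ℤ) - (τ : ℤ)) + x₀ +
      ∑ j ∈ Finset.range t,
        Complex.Gamma ((t : ℂ) - (j : ℂ) + α - 1) /
          (Complex.Gamma α * Complex.Gamma ((t : ℂ) - (j : ℂ))) * ((a - 1) * x j))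
    (z : ℂ) (hz : 1 < ‖z‖)
    (hsum : Summable (fun k : ℕ => ‖x k‖ * ‖z‖ ^ (-(k : ℤ))))
    (X : ℂ) (hX : X = ∑' k : ℕ, x k * z ^ (-(k : ℤ))) :
    X * (z - (b : ℂ) * z ^ ((1 : ℤ) - (τ : ℤ)) - (a - 1) * (1 - z⁻¹) ^ (-α))
      = z * x₀ + x₀ / (1 - z⁻¹) := by
  have hz0 : z ≠ 0 := by
    intro h
    rw [h, norm_zero] at hz
    linarith
  set w : ℂ := z⁻¹ with hwdef
  have hw : ‖w‖ < 1 := by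
    rw [hwdef, norm_inv]
    exact inv_lt_one_of_one_lt₀ hz
  -- the sequence f
  set f : ℕ → ℂ := fun k => x k * w ^ k with hfdef
  have hfn : ∀ k : ℕ, ‖f k‖ = ‖x k‖ * ‖z‖ ^ (-(k : ℤ)) := by
    intro k
    rw [hfdef]
    simp only [norm_mul, norm_pow, hwdef, norm_inv, zpow_neg, zpow_natCast, inv_pow]
  have hfs : Summable fun k => ‖f k‖ := hsum.congr fun k => (hfn k).symm
  have hfX : HasSum f X := by
    have h1 : (fun k : ℕ => x k * z ^ (-(k : ℤ))) = f := by
      funext k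
      rw [hfdef]
      simp only [zpow_neg, zpow_natCast, hwdef, inv_pow]
    rw [hX, h1]
    exact hfs.of_norm.hasSum
  -- binomial coefficients
  set cc : ℕ → ℂ := fun k => (∏ i ∈ range k, (α + i)) / (k ! : ℂ) with hccdef
  have hccsum : HasSum (fun k => cc k * w ^ k) ((1 - w) ^ (-α)) :=
    hasSum_one_sub_cpow α hw
  have hccnorm : Summable fun k => ‖cc k * w ^ k‖ :=
    summable_norm_one_sub_cpow α hw
  -- the convolution kernel g
  set g : ℕ → ℂ := fun m => if m = 0 then 0 else (a - 1) * w * (cc (m - 1) * w ^ (m - 1))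
    with hgdef
  have hg0 : g 0 = 0 := by simp [hgdef]
  have hgs : ∀ k : ℕ, g (k + 1) = (a - 1) * w * (cc k * w ^ k) := by
    intro k
    rw [hgdef]
    simp
  set G : ℂ := (a - 1) * w * (1 - w) ^ (-α) with hGdef
  have hg : HasSum g G := by
    have h1 : HasSum (fun k => g (k + 1)) G := by
      refine HasSum.congr_fun ?_ fun k => (hgs k).symm
      exact hccsum.mul_left _
    have h2 := (hasSum_nat_add_iff (f := g) 1).mp h1
    simpa [hg0] using h2
  have hgnorm : Summable fun m => ‖g m‖ := by
    refine (summable_nat_add_iff 1).mp ?_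
    refine Summable.congr (hccnorm.mul_left ‖(a - 1) * w‖) fun k => ?_
    rw [hgs k]; simp [norm_mul, mul_assoc]
  -- geometric part
  have he : HasSum (fun t : ℕ => x₀ * w ^ t) (x₀ * (1 - w)⁻¹) :=
    (hasSum_geometric_of_norm_lt_one hw).mul_left x₀
  -- convolution part
  set q : ℕ → ℂ := fun t => ∑ i ∈ range (t + 1), f i * g (t - i) with hqdef
  have hqs : Summable q := by
    refine Summable.of_norm ?_
    exact summable_norm_sum_mul_range_of_summable_norm hfs hgnorm
  have hq : HasSum q (X * G) := by
    have h1 : (∑' k, f k) * (∑' k, g k) = ∑' n, q n :=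
      tsum_mul_tsum_eq_tsum_sum_range_of_summable_norm hfs hgnorm
    rw [hfX.tsum_eq, hg.tsum_eq] at h1
    exact h1 ▸ hqs.hasSum
  -- delayed part
  set d : ℕ → ℂ := fun t => (b : ℂ) * xb ((t : ℤ) - (τ : ℤ)) * w ^ t with hddef
  have hshift : ∀ s : ℕ, d (s + τ) = (b : ℂ) * w ^ τ * f s := by
    intro s
    rw [hddef]
    simp only
    have h1 : ((s + τ : ℕ) : ℤ) - (τ : ℤ) = (s : ℤ) := by push_cast; ring
    rw [h1, hxb]
    rw [if_neg (by omega : ¬ ((s : ℤ) < 0))]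
    rw [Int.toNat_natCast, pow_add, hfdef]
    ring
  have hdsupp : ∀ t : ℕ, t ∉ Set.range (· + τ) → d t = 0 := by
    intro t ht
    have htτ : t < τ := by
      by_contra h
      refine ht ⟨t - τ, ?_⟩
      show t - τ + τ = t
      omega
    rw [hddef]
    simp only
    rw [hxb, if_pos (by omega : ((t : ℤ) - (τ : ℤ) < 0))]
    ring
  have hd : HasSum d ((b : ℂ) * w ^ τ * X) := by
    have h1 : HasSum (fun s => d (s + τ)) ((b : ℂ) * w ^ τ * X) :=
      HasSum.congr_fun (hfX.mul_left _) hshift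
    exact ((add_left_injective τ).hasSum_iff hdsupp).mp h1
  -- converting the convolution sum
  have hconv : ∀ t : ℕ, 1 ≤ t →
      (∑ j ∈ range t, Complex.Gamma ((t : ℂ) - (j : ℂ) + α - 1) /
        (Complex.Gamma α * Complex.Gamma ((t : ℂ) - (j : ℂ))) * ((a - 1) * x j)) * w ^ t
        = q t := by
    intro t ht
    rw [hqdef]
    simp only
    rw [sum_range_succ, Nat.sub_self, hg0, mul_zero, add_zero, sum_mul]
    refine sum_congr rfl fun j hj => ?_
    have hjt : j < t := mem_range.mp hj
    obtain ⟨k, hk⟩ : ∃ k, t - j = k + 1 := ⟨t - j - 1, by omega⟩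
    have hcast : (t : ℂ) - (j : ℂ) = ((k + 1 : ℕ) : ℂ) := by
      rw [← Nat.cast_sub hjt.le, hk]
    rw [hcast, gamma_coef_eq α hα k]
    have hcc : (∏ i ∈ range k, (α + i)) / (k ! : ℂ) = cc k := rfl
    rw [hcc, hk, hgs k, hfdef]
    simp only
    have hpow : w ^ t = w ^ j * w ^ (k + 1) := by rw [← pow_add]; congr 1; omega
    rw [hpow]
    ring
  -- the per-term identity
  have hft : ∀ t : ℕ, f t = d t + x₀ * w ^ t + q t := by
    intro t
    rcases Nat.eq_zero_or_pos t with h0 | h1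
    · subst h0
      rw [hfdef, hddef, hqdef]
      simp only
      rw [hx0, hxb, if_pos (by omega : ((0 : ℕ) : ℤ) - (τ : ℤ) < 0)]
      simp [hg0]
    · have hx := hrec t h1
      have hft' : f t = x t * w ^ t := rfl
      rw [hft', hx, add_mul, add_mul, hconv t h1, hddef]
  -- summing everything
  have htot : HasSum f ((b : ℂ) * w ^ τ * X + (x₀ * (1 - w)⁻¹ + X * G)) := by
    refine HasSum.congr_fun (hd.add (he.add hq)) fun t => ?_
    rw [hft t]
    ring
  have hE : X = (b : ℂ) * w ^ τ * X + (x₀ * (1 - w)⁻¹ + X * G) := hfX.unique htot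
  -- final algebra
  have h1w : (1 : ℂ) - w ≠ 0 := by
    intro h
    rw [sub_eq_zero] at h
    rw [← h, norm_one] at hw
    linarith
  have hzw : z * w = 1 := mul_inv_cancel₀ hz0
  have hA : z ^ ((1 : ℤ) - (τ : ℤ)) = z * w ^ τ := by
    rw [zpow_sub₀ hz0, zpow_one, zpow_natCast, hwdef, div_eq_mul_inv, inv_pow]
  have hQ : (1 - w) * (1 - w)⁻¹ = 1 := mul_inv_cancel₀ h1w
  rw [hA, div_eq_mul_inv]
  rw [hGdef] at hE
  linear_combination z * hE + (X * (a - 1) * (1 - w) ^ (-α) + x₀ * (1 - w)⁻¹) * hzw +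
    x₀ * z * hQ
end

section
/- Let α ∈ (0,1), b ∈ ℝ, and τ = 1. Then β(π) = β(0) if and only if b = −1; that is, x_β(π) = 1 and y_β(π) = 0 hold exactly when b = −1. (This is the bifurcation curve b = g₃(α) ≡ −1 for τ = 1, at which the boundary curve intersects itself at β(0) = β(π).) -/
/-- For delay `τ = 1`, the boundary curve satisfies `β(π) = β(0) = (1,0)` if and
only if `b = -1`; this is the bifurcation curve `b = g₃(α) ≡ -1`. -/
theorem boundary_self_intersection_iff (α b : ℝ) (hα : α ∈ Set.Ioo (0 : ℝ) 1)
    (xβ yβ : ℝ → ℝ)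
    (hx : ∀ t : ℝ, xβ t = 2 ^ α * (Real.sin (t / 2)) ^ α *
      (Real.cos (α * Real.pi / 2 + t * (1 - α / 2)) -
        b * Real.cos (α * Real.pi / 2 + t * (1 - (1 : ℝ) - α / 2))) + 1)
    (hy : ∀ t : ℝ, yβ t = 2 ^ α * (Real.sin (t / 2)) ^ α *
      (Real.sin (α * Real.pi / 2 + t * (1 - α / 2)) -
        b * Real.sin (α * Real.pi / 2 + t * (1 - (1 : ℝ) - α / 2)))) :
    (xβ Real.pi = 1 ∧ yβ Real.pi = 0) ↔ b = -1 := by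
  have h1 : α * Real.pi / 2 + Real.pi * (1 - α / 2) = Real.pi := by ring
  have h2 : α * Real.pi / 2 + Real.pi * (1 - (1 : ℝ) - α / 2) = 0 := by ring
  have hs : Real.sin (Real.pi / 2) = 1 := Real.sin_pi_div_two
  have hxπ : xβ Real.pi = 2 ^ α * (-1 - b) + 1 := by
    rw [hx Real.pi, h1, h2, hs, Real.one_rpow, Real.cos_pi, Real.cos_zero, mul_one, mul_one]
  have hyπ : yβ Real.pi = 0 := by
    rw [hy Real.pi, h1, h2, Real.sin_pi, Real.sin_zero]
    ring
  have hpos : (0 : ℝ) < 2 ^ α := Real.rpow_pos_of_pos (by norm_num) α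
  constructor
  · rintro ⟨h, -⟩
    rw [hxπ] at h
    have : (2 : ℝ) ^ α * (-1 - b) = 0 := by linarith
    have := (mul_eq_zero.mp this).resolve_left (ne_of_gt hpos)
    linarith
  · rintro rfl
    refine ⟨?_, hyπ⟩
    rw [hxπ]; ring
end

section
/- Let α ∈ (0,1) and b ∈ ℝ, and consider the boundary curve coordinates for delay τ = 2: x_β(t) = 2^α·(sin(t/2))^α·( cos(απ/2 + t(1−α/2)) − b·cos(απ/2 − t(1+α/2)) ) + 1 and y_β(t) = 2^α·(sin(t/2))^α·( sin(απ/2 + t(1−α/2)) − b·sin(απ/2 − t(1+α/2)) ). Suppose t₀ ∈ (0, 2π) is such that x_β and y_β are differentiable at t₀ with x_β′(t₀) = 0 and y_β′(t₀) = 0, and suppose −1 + α + b²(1+α) ≠ 0. Then cos(t₀) = ( −2 + 2α − α² + b²(2 + 2α + α²) ) / ( 2(−1 + α + b²(1+α)) ). -/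
/-- Cusp condition for delay `τ = 2`: if both coordinate derivatives of the
boundary curve vanish at `t₀ ∈ (0, 2π)` and `-1 + α + b²(1+α) ≠ 0`, then
`cos t₀ = (-2 + 2α - α² + b²(2 + 2α + α²)) / (2(-1 + α + b²(1+α)))`. -/
theorem cusp_condition_tau_two (α b : ℝ) (hα : α ∈ Set.Ioo (0 : ℝ) 1)
    (xβ yβ : ℝ → ℝ)
    (hx : ∀ t : ℝ, xβ t = 2 ^ α * (Real.sin (t / 2)) ^ α *
      (Real.cos (α * Real.pi / 2 + t * (1 - α / 2)) -
        b * Real.cos (α * Real.pi / 2 - t * (1 + α / 2))) + 1)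
    (hy : ∀ t : ℝ, yβ t = 2 ^ α * (Real.sin (t / 2)) ^ α *
      (Real.sin (α * Real.pi / 2 + t * (1 - α / 2)) -
        b * Real.sin (α * Real.pi / 2 - t * (1 + α / 2))))
    (t₀ : ℝ) (ht₀ : t₀ ∈ Set.Ioo 0 (2 * Real.pi))
    (hdx : HasDerivAt xβ 0 t₀) (hdy : HasDerivAt yβ 0 t₀)
    (hden : -1 + α + b ^ 2 * (1 + α) ≠ 0) :
    Real.cos t₀ = (-2 + 2 * α - α ^ 2 + b ^ 2 * (2 + 2 * α + α ^ 2)) /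
      (2 * (-1 + α + b ^ 2 * (1 + α))) := by
  obtain ⟨ht1, ht2⟩ := ht₀
  have hs : 0 < Real.sin (t₀ / 2) :=
    Real.sin_pos_of_pos_of_lt_pi (by linarith) (by linarith)
  set s := Real.sin (t₀ / 2) with hsdef
  set c := Real.cos (t₀ / 2) with hcdef
  set A := α * Real.pi / 2 + t₀ * (1 - α / 2) with hA
  set B := α * Real.pi / 2 - t₀ * (1 + α / 2) with hB
  -- derivative of t ↦ sin(t/2)^α
  have hhalf : HasDerivAt (fun t : ℝ => t / 2) (1 / 2) t₀ := by
    simpa using (hasDerivAt_id t₀).div_const 2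
  have hsin : HasDerivAt (fun t : ℝ => Real.sin (t / 2)) (c * (1 / 2)) t₀ := by
    have := (Real.hasDerivAt_sin (t₀ / 2)).comp t₀ hhalf; exact this
  have hg : HasDerivAt (fun t : ℝ => Real.sin (t / 2) ^ α)
      (c * (1 / 2) * α * s ^ (α - 1)) t₀ :=
    hsin.rpow_const (Or.inl hs.ne')
  -- inner affine maps
  have hu1 : HasDerivAt (fun t : ℝ => α * Real.pi / 2 + t * (1 - α / 2)) (1 - α / 2) t₀ := by
    simpa using (((hasDerivAt_id t₀).mul_const (1 - α / 2)).const_add (α * Real.pi / 2))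
  have hu2 : HasDerivAt (fun t : ℝ => α * Real.pi / 2 - t * (1 + α / 2)) (-(1 + α / 2)) t₀ := by
    simpa using (((hasDerivAt_id t₀).mul_const (1 + α / 2)).const_sub (α * Real.pi / 2))
  -- trig parts
  have hPx : HasDerivAt (fun t : ℝ => Real.cos (α * Real.pi / 2 + t * (1 - α / 2)) -
      b * Real.cos (α * Real.pi / 2 - t * (1 + α / 2)))
      (-Real.sin A * (1 - α / 2) - b * (-Real.sin B * (-(1 + α / 2)))) t₀ := by
    have := ((Real.hasDerivAt_cos A).comp t₀ hu1).sub
      (((Real.hasDerivAt_cos B).comp t₀ hu2).const_mul b); exact this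
  have hPy : HasDerivAt (fun t : ℝ => Real.sin (α * Real.pi / 2 + t * (1 - α / 2)) -
      b * Real.sin (α * Real.pi / 2 - t * (1 + α / 2)))
      (Real.cos A * (1 - α / 2) - b * (Real.cos B * (-(1 + α / 2)))) t₀ := by
    have := ((Real.hasDerivAt_sin A).comp t₀ hu1).sub
      (((Real.hasDerivAt_sin B).comp t₀ hu2).const_mul b); exact this
  -- rewrite xβ, yβ in the associativity form of the product rule builders
  have hxfun : xβ = fun t => 2 ^ α * ((Real.sin (t / 2)) ^ α *
      (Real.cos (α * Real.pi / 2 + t * (1 - α / 2)) -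
        b * Real.cos (α * Real.pi / 2 - t * (1 + α / 2)))) + 1 := by
    funext t; rw [hx t]; ring
  have hyfun : yβ = fun t => 2 ^ α * ((Real.sin (t / 2)) ^ α *
      (Real.sin (α * Real.pi / 2 + t * (1 - α / 2)) -
        b * Real.sin (α * Real.pi / 2 - t * (1 + α / 2)))) := by
    funext t; rw [hy t]; ring
  rw [hxfun] at hdx
  rw [hyfun] at hdy
  have hx0 := hdx.unique (((hg.mul hPx).const_mul ((2:ℝ) ^ α)).add_const 1)
  have hy0 := hdy.unique ((hg.mul hPy).const_mul ((2:ℝ) ^ α))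
  -- factor out s^(α-1)
  have hsa : s ^ α = s ^ (α - 1) * s := by
    rw [← Real.rpow_add_one hs.ne' (α - 1)]; ring_nf
  have h2pos : (0:ℝ) < 2 ^ α := Real.rpow_pos_of_pos (by norm_num) α
  have hspos : (0:ℝ) < s ^ (α - 1) := Real.rpow_pos_of_pos hs (α - 1)
  have hE1 : c * (1 / 2) * α * (Real.cos A - b * Real.cos B) +
      s * (-Real.sin A * (1 - α / 2) - b * (-Real.sin B * (-(1 + α / 2)))) = 0 := by
    have hprod : 2 ^ α * (s ^ (α - 1) *
        (c * (1 / 2) * α * (Real.cos A - b * Real.cos B) +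
          s * (-Real.sin A * (1 - α / 2) - b * (-Real.sin B * (-(1 + α / 2)))))) = 0 := by
      rw [hsa] at hx0
      linear_combination -hx0
    rcases mul_eq_zero.1 hprod with h' | h'
    · exact absurd h' h2pos.ne'
    rcases mul_eq_zero.1 h' with h'' | h''
    · exact absurd h'' hspos.ne'
    · exact h''
  have hE2 : c * (1 / 2) * α * (Real.sin A - b * Real.sin B) +
      s * (Real.cos A * (1 - α / 2) - b * (Real.cos B * (-(1 + α / 2)))) = 0 := by
    have hprod : 2 ^ α * (s ^ (α - 1) *
        (c * (1 / 2) * α * (Real.sin A - b * Real.sin B) +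
          s * (Real.cos A * (1 - α / 2) - b * (Real.cos B * (-(1 + α / 2)))))) = 0 := by
      rw [hsa] at hy0
      linear_combination -hy0
    rcases mul_eq_zero.1 hprod with h' | h'
    · exact absurd h' h2pos.ne'
    rcases mul_eq_zero.1 h' with h'' | h''
    · exact absurd h'' hspos.ne'
    · exact h''
  -- algebra
  have hpA := Real.sin_sq_add_cos_sq A
  have hpB := Real.sin_sq_add_cos_sq B
  have hpt : s ^ 2 + c ^ 2 = 1 := Real.sin_sq_add_cos_sq (t₀ / 2)
  have hu : Real.cos t₀ = 1 - 2 * s ^ 2 := by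
    have h1 := Real.cos_two_mul (t₀ / 2)
    have h2 : 2 * (t₀ / 2) = t₀ := by ring
    rw [h2] at h1
    rw [h1, ← hcdef]
    linear_combination 2 * hpt
  have hD : (2 * (-1 + α + b ^ 2 * (1 + α))) ≠ 0 := by
    intro h
    rcases mul_eq_zero.1 h with h' | h'
    · norm_num at h'
    · exact hden h'
  rw [eq_div_iff hD]
  have hK : α ^ 2 / 4 * c ^ 2 + (1 - α / 2) ^ 2 * s ^ 2 -
      b ^ 2 * (α ^ 2 / 4 * c ^ 2 + (1 + α / 2) ^ 2 * s ^ 2) = 0 := by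
    linear_combination
      (c * (α / 2) * Real.cos A - (1 - α / 2) * s * Real.sin A +
        b * (c * (α / 2) * Real.cos B + (1 + α / 2) * s * Real.sin B)) * hE1 +
      (c * (α / 2) * Real.sin A + (1 - α / 2) * s * Real.cos A +
        b * (c * (α / 2) * Real.sin B - (1 + α / 2) * s * Real.cos B)) * hE2 -
      (α ^ 2 / 4 * c ^ 2 + (1 - α / 2) ^ 2 * s ^ 2) * hpA +
      b ^ 2 * (α ^ 2 / 4 * c ^ 2 + (1 + α / 2) ^ 2 * s ^ 2) * hpB
  linear_combination (2 * (-1 + α + b ^ 2 * (1 + α))) * hu + 4 * hK -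
    α ^ 2 * (1 - b ^ 2) * hpt
end
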